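/- arXiv:2510.18008 — 2 statements merged into one kernel-verified Lean document; each statement's English description precedes it below -/
import Mathlib

section
/- Let X* ∈ ℝ^d be a sum of n one-hot vectors with v ≤ n non-zero entries, and suppose x̂ ∈ ℝ^d satisfies ‖x̂ − X*/‖X*‖₂‖₂ ≤ ε with 0 < ε < 1/(2n). Let x̂_th retain the n largest-magnitude entries of x̂ and zero the rest. Then ‖x̂_th − X*/‖X*‖₂‖₂ ≤ ε. -/
open Finset

/-- If `X*` is a sum of `n` one-hot vectors and `x̂` satisfies
`‖x̂ - X*/‖X*‖₂‖₂ ≤ ε` with `0 < ε < 1/(2n)`, then the truncation `x̂_th` of `x̂`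
to its `n` largest-magnitude entries satisfies the same bound. -/
theorem truncation_preserves_error {d n : ℕ} (hn : 1 ≤ n)
    (X : Fin n → EuclideanSpace ℝ (Fin d))
    (hone : ∀ i, ∃ j : Fin d, X i = fun m => if m = j then (1 : ℝ) else 0)
    (xhat : EuclideanSpace ℝ (Fin d)) (ε : ℝ) (hε0 : 0 < ε) (hε : ε < 1 / (2 * n))
    (hclose : ‖xhat - (‖∑ i, X i‖)⁻¹ • (∑ i, X i)‖ ≤ ε)
    (S : Finset (Fin d)) (hScard : S.card = n)
    (hStop : ∀ i ∈ S, ∀ j ∉ S, |xhat j| ≤ |xhat i|)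
    (xth : EuclideanSpace ℝ (Fin d))
    (hxth : ∀ j, xth j = if j ∈ S then xhat j else 0) :
    ‖xth - (‖∑ i, X i‖)⁻¹ • (∑ i, X i)‖ ≤ ε := by
  classical
  choose j hj using hone
  set Y : EuclideanSpace ℝ (Fin d) := ∑ i, X i with hYdef
  set y : EuclideanSpace ℝ (Fin d) := (‖Y‖)⁻¹ • Y with hydef
  have hnpos : (0:ℝ) < n := by exact_mod_cast hn
  -- coordinate bound
  have coord : ∀ (v : EuclideanSpace ℝ (Fin d)) (m : Fin d), |v m| ≤ ‖v‖ := by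
    intro v m
    rw [EuclideanSpace.norm_eq]
    have h1 : |v m| = Real.sqrt (‖v m‖ ^ 2) := by
      rw [Real.sqrt_sq_eq_abs, abs_norm, Real.norm_eq_abs]
    rw [h1]
    exact Real.sqrt_le_sqrt (Finset.single_le_sum (fun i _ => sq_nonneg ‖v i‖) (mem_univ m))
  -- entries of Y
  have hYapp : ∀ m, Y m = ((univ.filter fun i => m = j i).card : ℝ) := by
    intro m
    have h1 : Y m = ∑ i, X i m := by rw [hYdef, WithLp.ofLp_sum, Finset.sum_apply]
    have h2 : ∀ i, X i m = if m = j i then (1:ℝ) else 0 := fun i => by rw [hj i]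
    rw [h1, Finset.sum_congr rfl (fun i _ => h2 i), Finset.sum_boole]
  have hYnonneg : ∀ m, 0 ≤ Y m := fun m => by rw [hYapp]; positivity
  have hYge : ∀ m, Y m ≠ 0 → 1 ≤ Y m := by
    intro m hm
    rw [hYapp] at hm ⊢
    have : 1 ≤ (univ.filter fun i => m = j i).card := by
      rcases Nat.eq_zero_or_pos (univ.filter fun i => m = j i).card with h | h
      · exact absurd (by simp [h]) hm
      · exact h
    exact Nat.one_le_cast.mpr this
  -- norms of the one-hot vectors
  have hX1 : ∀ i, ‖X i‖ = 1 := by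
    intro i
    have h2 : X i = EuclideanSpace.single (j i) (1:ℝ) := by
      ext m; rw [hj i]; simp [EuclideanSpace.single_apply]
    rw [h2]; simp
  have hYnorm : ‖Y‖ ≤ n := by
    calc ‖Y‖ ≤ ∑ i : Fin n, ‖X i‖ := norm_sum_le _ _
    _ = n := by simp [hX1]
  have hYpos : 0 < ‖Y‖ := by
    have i0 : Fin n := ⟨0, hn⟩
    have h1 : Y (j i0) ≠ 0 := by
      rw [hYapp]
      have : i0 ∈ univ.filter fun i => j i0 = j i := by simp
      have hc : 0 < (univ.filter fun i => j i0 = j i).card := card_pos.2 ⟨i0, this⟩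
      positivity
    have : Y ≠ 0 := fun h => h1 (by rw [h]; rfl)
    exact norm_pos_iff.2 this
  have hyapp : ∀ m, y m = ‖Y‖⁻¹ * Y m := fun m => rfl
  -- support of Y has at most n elements
  have hTcard : (univ.filter fun m => Y m ≠ 0).card ≤ n := by
    have hsub : (univ.filter fun m => Y m ≠ 0) ⊆ univ.image j := by
      intro m hm
      rw [mem_filter] at hm
      have := hm.2
      rw [hYapp] at this
      have hc : 0 < (univ.filter fun i => m = j i).card := by
        rcases Nat.eq_zero_or_pos (univ.filter fun i => m = j i).card with h | h
        · exact absurd (by simp [h]) this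
        · exact h
      obtain ⟨i, hi⟩ := card_pos.1 hc
      rw [mem_filter] at hi
      exact mem_image.2 ⟨i, mem_univ i, hi.2.symm⟩
    calc (univ.filter fun m => Y m ≠ 0).card ≤ (univ.image j).card := card_le_card hsub
    _ ≤ (univ : Finset (Fin n)).card := card_image_le
    _ = n := by simp
  -- key claim: Y vanishes off S
  have hzero : ∀ m ∉ S, Y m = 0 := by
    intro m hmS
    by_contra hm
    -- m is in the support, which is small, so some i ∈ S has Y i = 0
    have hnotsub : ¬ S ⊆ (univ.filter fun k => Y k ≠ 0) := by
      intro hsub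
      have hmT : m ∈ (univ.filter fun k => Y k ≠ 0) := by simp [hm]
      have : (insert m S).card ≤ (univ.filter fun k => Y k ≠ 0).card :=
        card_le_card (insert_subset hmT hsub)
      rw [card_insert_of_notMem hmS, hScard] at this
      omega
    obtain ⟨i, hiS, hiT⟩ := not_subset.1 hnotsub
    have hYi : Y i = 0 := by
      by_contra h; exact hiT (by simp [h])
    -- |xhat i| ≤ ε
    have hyi : y i = 0 := by rw [hyapp, hYi, mul_zero]
    have h1 : |xhat i| ≤ ε := by
      have := coord (xhat - y) i
      have happ : (xhat - y) i = xhat i - y i := rfl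
      rw [happ, hyi, sub_zero] at this
      exact this.trans hclose
    -- y m ≥ 1/n
    have hym : (n:ℝ)⁻¹ ≤ y m := by
      rw [hyapp]
      have h2 : (n:ℝ)⁻¹ ≤ ‖Y‖⁻¹ := inv_anti₀ hYpos hYnorm
      calc (n:ℝ)⁻¹ = (n:ℝ)⁻¹ * 1 := (mul_one _).symm
      _ ≤ ‖Y‖⁻¹ * Y m := by
          apply mul_le_mul h2 (hYge m hm) zero_le_one (le_of_lt (inv_pos.2 hYpos))
    -- |xhat m| ≥ 1/n - ε
    have h3 : (n:ℝ)⁻¹ - ε ≤ |xhat m| := by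
      have := coord (xhat - y) m
      have happ : (xhat - y) m = xhat m - y m := rfl
      rw [happ] at this
      have h4 : |xhat m - y m| ≤ ε := this.trans hclose
      have h5 : y m - ε ≤ xhat m := by
        have := abs_le.1 h4
        linarith [this.1]
      have h6 : xhat m ≤ |xhat m| := le_abs_self _
      linarith
    have h7 : |xhat m| ≤ |xhat i| := hStop i hiS m hmS
    have h8 : ε < 1 / (2 * n) := hε
    have hne : (n:ℝ) ≠ 0 := ne_of_gt hnpos
    have h10 : (1:ℝ) / (2 * n) + 1 / (2 * n) = (n:ℝ)⁻¹ := by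
      rw [← add_div, inv_eq_one_div, div_eq_div_iff (by positivity) hne]
      ring
    have h9 : (1:ℝ) / (2 * n) ≤ (n:ℝ)⁻¹ - 1 / (2 * n) := by linarith
    linarith
  -- conclude
  have hymzero : ∀ m ∉ S, y m = 0 := fun m hm => by
    rw [hyapp, hzero m hm, mul_zero]
  have hle : ‖xth - y‖ ≤ ‖xhat - y‖ := by
    rw [EuclideanSpace.norm_eq, EuclideanSpace.norm_eq]
    apply Real.sqrt_le_sqrt
    apply Finset.sum_le_sum
    intro m _
    have happ1 : (xth - y) m = xth m - y m := rfl
    have happ2 : (xhat - y) m = xhat m - y m := rfl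
    rw [happ1, happ2]
    by_cases hm : m ∈ S
    · rw [hxth m, if_pos hm]
    · rw [hxth m, if_neg hm, hymzero m hm, sub_zero, norm_zero]
      simpa using sq_nonneg (xhat m)
  exact hle.trans hclose
end

section
/- Let X* ∈ ℝ^d be a sum of n one-hot vectors, and let x̂_th ∈ ℝ^d be a vector with at most n non-zero entries, ‖x̂_th‖₂ ≤ 1, satisfying ‖x̂_th − X*/‖X*‖₂‖₂ ≤ ε with 0 < ε < 1/(2n). Define x̂_f = x̂_th · n/(∑_j x̂_th[j]). Then ‖x̂_f − X*‖₂ ≤ ‖X*‖₂·ε + ‖X*‖₂·√(2n)·ε / (n/‖X*‖₂ − √(2n)·ε). -/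
open Finset

private lemma abs_coord_le {d : ℕ} (x : EuclideanSpace ℝ (Fin d)) (m : Fin d) : |x m| ≤ ‖x‖ := by
  rw [EuclideanSpace.norm_eq]
  have h : |x m| = Real.sqrt (‖x m‖ ^ 2) := by rw [Real.sqrt_sq_eq_abs]; simp
  rw [h]
  exact Real.sqrt_le_sqrt
    (Finset.single_le_sum (f := fun i => ‖x i‖ ^ 2) (fun i _ => sq_nonneg _) (mem_univ m))

private lemma normsq_eq {d : ℕ} (x : EuclideanSpace ℝ (Fin d)) : ‖x‖ ^ 2 = ∑ m, (x m) ^ 2 := by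
  rw [EuclideanSpace.norm_eq, Real.sq_sqrt (by positivity)]
  simp [Real.norm_eq_abs, sq_abs]

/-- Error bound for the rescaled truncated estimate in histogram estimation:
if `X*` is a sum of `n` one-hot vectors, `x̂_th` has at most `n` non-zero entries,
`‖x̂_th‖₂ ≤ 1`, and `‖x̂_th - X*/‖X*‖₂‖₂ ≤ ε` with `0 < ε < 1/(2n)`, then the rescaled
vector `x̂_f = (n / ∑ j x̂_th j) • x̂_th` satisfies
`‖x̂_f - X*‖₂ ≤ ‖X*‖₂ ε + ‖X*‖₂ √(2n) ε / (n/‖X*‖₂ - √(2n) ε)`. -/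
theorem rescaled_truncation_error {d n : ℕ} (hn : 1 ≤ n)
    (X : Fin n → EuclideanSpace ℝ (Fin d))
    (hone : ∀ i, ∃ j : Fin d, X i = fun m => if m = j then (1 : ℝ) else 0)
    (xth : EuclideanSpace ℝ (Fin d))
    (hsparse : (Finset.univ.filter fun j => xth j ≠ 0).card ≤ n)
    (hnorm : ‖xth‖ ≤ 1)
    (ε : ℝ) (hε0 : 0 < ε) (hε : ε < 1 / (2 * n))
    (hclose : ‖xth - (‖∑ i, X i‖)⁻¹ • (∑ i, X i)‖ ≤ ε) :
    ‖((n : ℝ) / ∑ j, xth j) • xth - ∑ i, X i‖ ≤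
      ‖∑ i, X i‖ * ε +
        ‖∑ i, X i‖ * Real.sqrt (2 * n) * ε / ((n : ℝ) / ‖∑ i, X i‖ - Real.sqrt (2 * n) * ε) := by
  have hn0 : (0 : ℝ) < n := by exact_mod_cast hn
  choose jh hXf using hone
  set S : EuclideanSpace ℝ (Fin d) := ∑ i, X i with hSdef
  have hSapp : ∀ m, S m = ∑ i, (if m = jh i then (1 : ℝ) else 0) := by
    intro m
    rw [hSdef, WithLp.ofLp_sum, Finset.sum_apply]
    exact Finset.sum_congr rfl fun i _ => by rw [hXf i]
  have hSnonneg : ∀ m, 0 ≤ S m := fun m => by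
    rw [hSapp]
    exact Finset.sum_nonneg fun i _ => by split <;> norm_num
  have hSsum : ∑ m, S m = (n : ℝ) := by
    simp only [hSapp]
    rw [Finset.sum_comm]
    simp
  have hS_le : ‖S‖ ≤ (n : ℝ) := by
    calc ‖S‖ ≤ ∑ i, ‖X i‖ := norm_sum_le _ _
      _ = (n : ℝ) := by
        have : ∀ i, ‖X i‖ = 1 := by
          intro i
          have : X i = EuclideanSpace.single (jh i) (1 : ℝ) := by
            ext m; rw [hXf i]; simp [EuclideanSpace.single_apply]
          rw [this, EuclideanSpace.norm_single]; norm_num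
        simp [this]
  have hS_ge : (1 : ℝ) ≤ ‖S‖ := by
    have i0 : Fin n := ⟨0, hn⟩
    have h1 : (1 : ℝ) ≤ S (jh i0) := by
      rw [hSapp]
      have := Finset.single_le_sum (f := fun i => if jh i0 = jh i then (1 : ℝ) else 0)
        (fun i _ => by split <;> norm_num) (mem_univ i0)
      simpa using this
    calc (1 : ℝ) ≤ S (jh i0) := h1
      _ ≤ |S (jh i0)| := le_abs_self _
      _ ≤ ‖S‖ := abs_coord_le S _
  have hS0 : 0 < ‖S‖ := by linarith
  -- support of S
  have hBcard : (univ.filter fun m => S m ≠ 0).card ≤ n := by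
    have hsub : (univ.filter fun m => S m ≠ 0) ⊆ univ.image jh := by
      intro m hm
      simp only [mem_filter, mem_univ, true_and] at hm
      rw [hSapp] at hm
      by_contra hmem
      apply hm
      apply Finset.sum_eq_zero
      intro i _
      rw [if_neg]
      intro he
      exact hmem (by rw [he]; exact Finset.mem_image_of_mem jh (mem_univ i))
    calc (univ.filter fun m => S m ≠ 0).card ≤ (univ.image jh).card := Finset.card_le_card hsub
      _ ≤ (univ : Finset (Fin n)).card := Finset.card_image_le
      _ = n := by simp
  set u : EuclideanSpace ℝ (Fin d) := ‖S‖⁻¹ • S with hudef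
  set v : EuclideanSpace ℝ (Fin d) := xth - u with hvdef
  have hvapp : ∀ m, v m = xth m - ‖S‖⁻¹ * S m := fun m => rfl
  have husum : ∑ m, u m = (n : ℝ) / ‖S‖ := by
    have h1 : ∑ m, u m = ‖S‖⁻¹ * ∑ m, S m := by
      rw [Finset.mul_sum]
      exact Finset.sum_congr rfl fun m _ => rfl
    rw [h1, hSsum]; ring
  set δ : ℝ := Real.sqrt (2 * n) * ε with hδdef
  have hδ0 : 0 ≤ δ := by positivity
  have hδsq : δ ^ 2 = 2 * n * ε ^ 2 := by
    rw [hδdef, mul_pow, Real.sq_sqrt (by positivity)]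
  set t : ℝ := ∑ m, xth m with htdef
  have hsumv : |t - (n : ℝ) / ‖S‖| ≤ δ := by
    have hviewsum : ∑ m, v m = t - (n : ℝ) / ‖S‖ := by
      have h1 : ∑ m, v m = ∑ m, (xth m - u m) :=
        Finset.sum_congr rfl fun m _ => rfl
      rw [h1, Finset.sum_sub_distrib, husum, htdef]
    set T := (univ.filter fun m => xth m ≠ 0) ∪ (univ.filter fun m => S m ≠ 0) with hT
    have hTcard : (T.card : ℝ) ≤ 2 * n := by
      have h2 : T.card ≤ n + n :=
        le_trans (Finset.card_union_le _ _) (add_le_add hsparse hBcard)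
      push_cast
      calc (T.card : ℝ) ≤ (n : ℝ) + n := by exact_mod_cast h2
        _ = 2 * n := by ring
    have hrestrict : ∑ m, v m = ∑ m ∈ T, v m := by
      symm
      apply Finset.sum_subset (Finset.subset_univ T)
      intro m _ hm
      simp only [hT, Finset.mem_union, mem_filter, mem_univ, true_and, not_or, not_not] at hm
      rw [hvapp, hm.1, hm.2]; ring
    have hcs : (∑ m ∈ T, v m) ^ 2 ≤ (T.card : ℝ) * ∑ m ∈ T, (v m) ^ 2 :=
      sq_sum_le_card_mul_sum_sq
    have hsub2 : ∑ m ∈ T, (v m) ^ 2 ≤ ‖v‖ ^ 2 := by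
      rw [normsq_eq]
      exact Finset.sum_le_sum_of_subset_of_nonneg (Finset.subset_univ T)
        (fun m _ _ => sq_nonneg _)
    have hvnorm : ‖v‖ ≤ ε := hclose
    have hvsq : ‖v‖ ^ 2 ≤ ε ^ 2 := by
      apply pow_le_pow_left₀ (norm_nonneg _) hvnorm
    have h1 : (∑ m, v m) ^ 2 ≤ 2 * n * ε ^ 2 := by
      rw [hrestrict]
      calc (∑ m ∈ T, v m) ^ 2 ≤ (T.card : ℝ) * ∑ m ∈ T, (v m) ^ 2 := hcs
        _ ≤ (2 * n) * ε ^ 2 := by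
          apply mul_le_mul hTcard (le_trans hsub2 hvsq)
            (Finset.sum_nonneg fun m _ => sq_nonneg _) (by positivity)
    rw [← hviewsum, ← Real.sqrt_sq hδ0, ← Real.sqrt_sq_eq_abs]
    exact Real.sqrt_le_sqrt (by nlinarith)
  have hε2n : ε * (2 * n) < 1 := by
    rw [lt_div_iff₀ (by positivity)] at hε
    linarith
  have hδlt1 : δ < 1 := by
    have hs2n : Real.sqrt (2 * n) * Real.sqrt (2 * n) = 2 * n :=
      Real.mul_self_sqrt (by positivity)
    have h1le : (1 : ℝ) ≤ Real.sqrt (2 * n) := by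
      rw [show (1 : ℝ) = Real.sqrt 1 by simp]
      exact Real.sqrt_le_sqrt (by linarith)
    rw [hδdef]
    nlinarith
  set a : ℝ := (n : ℝ) / ‖S‖ with hadef
  have ha1 : (1 : ℝ) ≤ a := (one_le_div hS0).mpr hS_le
  have hadpos : 0 < a - δ := by linarith
  have hta : a - δ ≤ t := by
    have := abs_le.mp hsumv
    linarith [this.1]
  have ht0 : 0 < t := lt_of_lt_of_le hadpos hta
  have hdecomp : ((n : ℝ) / t) • xth - S = ((n : ℝ) / t - ‖S‖) • xth + ‖S‖ • v := by
    rw [hvdef, hudef, smul_sub, smul_smul, mul_inv_cancel₀ (ne_of_gt hS0), one_smul, sub_smul]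
    abel
  have hnormbound : ‖((n : ℝ) / t) • xth - S‖ ≤ |(n : ℝ) / t - ‖S‖| + ‖S‖ * ε := by
    rw [hdecomp]
    calc ‖((n : ℝ) / t - ‖S‖) • xth + ‖S‖ • v‖
        ≤ ‖((n : ℝ) / t - ‖S‖) • xth‖ + ‖‖S‖ • v‖ := norm_add_le _ _
      _ = |(n : ℝ) / t - ‖S‖| * ‖xth‖ + ‖S‖ * ‖v‖ := by
          simp [norm_smul, Real.norm_eq_abs, abs_of_pos hS0]
      _ ≤ |(n : ℝ) / t - ‖S‖| * 1 + ‖S‖ * ε := by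
          gcongr
      _ = |(n : ℝ) / t - ‖S‖| + ‖S‖ * ε := by ring
  have hsa : ‖S‖ * a = n := by
    rw [hadef, mul_comm, div_mul_cancel₀ _ (ne_of_gt hS0)]
  have hscale : |(n : ℝ) / t - ‖S‖| ≤ ‖S‖ * δ / (a - δ) := by
    have heq : (n : ℝ) / t - ‖S‖ = ‖S‖ * (a - t) / t := by
      rw [eq_div_iff (ne_of_gt ht0), sub_mul, div_mul_cancel₀ _ (ne_of_gt ht0), mul_sub, hsa]
    rw [heq, abs_div, abs_of_pos ht0, abs_mul, abs_of_pos hS0]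
    have habs' : |a - t| ≤ δ := by rw [abs_sub_comm]; exact hsumv
    calc ‖S‖ * |a - t| / t ≤ ‖S‖ * δ / t := by gcongr
      _ ≤ ‖S‖ * δ / (a - δ) :=
        div_le_div_of_nonneg_left (by positivity) hadpos hta
  calc ‖((n : ℝ) / t) • xth - S‖ ≤ |(n : ℝ) / t - ‖S‖| + ‖S‖ * ε := hnormbound
    _ ≤ ‖S‖ * δ / (a - δ) + ‖S‖ * ε := by linarith
    _ = ‖S‖ * ε + ‖S‖ * Real.sqrt (2 * n) * ε / (a - δ) := by
        rw [hδdef]; ring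
end
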